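/- arXiv:2003.04373 — 2 statements merged into one kernel-verified Lean document; each statement's English description precedes it below -/
import Mathlib

section
/- Let G be a finite p-group, k a field of characteristic p > 0, and m ≥ 0 an integer. Let M be a finite-dimensional kG-module and Q a finitely generated free kG-module. If M ⊕ Q admits a finite permutation resolution that is free up to degree m, then M itself admits a finite permutation resolution that is free up to degree m. -/
open CategoryTheory

def IsPermutationModule (k G : Type) [Field k] [Group G]
    (P : Type) [AddCommGroup P] [Module (MonoidAlgebra k G) P] : Prop :=
  ∃ (X : Type) (_ : Fintype X) (m : MulAction G X),
    Nonempty (P ≃ₗ[MonoidAlgebra k G] (@Representation.ofMulAction k _ G _ X m).asModule)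

def HasPermResFreeUpTo (k G : Type) [Field k] [Group G] (m : ℕ)
    (M : Type) [AddCommGroup M] [Module (MonoidAlgebra k G) M] : Prop :=
  ∃ (n : ℕ) (P : ℕ → ModuleCat (MonoidAlgebra k G))
    (d : ∀ i, P (i + 1) ⟶ P i) (ε : P 0 ⟶ ModuleCat.of (MonoidAlgebra k G) M),
    (∀ i, IsPermutationModule k G (P i)) ∧
    (∀ i ≤ m, Module.Free (MonoidAlgebra k G) (P i)) ∧
    (∀ i, n < i → Subsingleton (P i)) ∧
    Function.Surjective ε ∧
    Function.Exact (d 0) ε ∧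
    ∀ i, Function.Exact (d (i + 1)) (d i)

def HasFinitePermRes (k G : Type) [Field k] [Group G]
    (M : Type) [AddCommGroup M] [Module (MonoidAlgebra k G) M] : Prop :=
  ∃ (n : ℕ) (P : ℕ → ModuleCat (MonoidAlgebra k G))
    (d : ∀ i, P (i + 1) ⟶ P i) (ε : P 0 ⟶ ModuleCat.of (MonoidAlgebra k G) M),
    (∀ i, IsPermutationModule k G (P i)) ∧
    (∀ i, n < i → Subsingleton (P i)) ∧
    Function.Surjective ε ∧
    Function.Exact (d 0) ε ∧
    ∀ i, Function.Exact (d (i + 1)) (d i)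

def HasGoodPermRes (k G : Type) [Field k] [Group G]
    (M : Type) [AddCommGroup M] [Module (MonoidAlgebra k G) M] : Prop :=
  ∀ m : ℕ, HasPermResFreeUpTo k G m M

section Helpers

variable {k G : Type} [Field k] [Group G]

/-- kG-linear map between asModules from an equivariant k-linear map. -/
noncomputable def asModuleHomOf {V W : Type} [AddCommGroup V] [Module k V]
    [AddCommGroup W] [Module k W]
    (ρ : Representation k G V) (τ : Representation k G W)
    (f : V →ₗ[k] W) (hf : ∀ g : G, f.comp (ρ g) = (τ g).comp f) :
    ρ.asModule →ₗ[MonoidAlgebra k G] τ.asModule where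
  toFun := f
  map_add' := f.map_add
  map_smul' := fun r x => Rep.to_Module_monoidAlgebra_map_aux V W ρ τ f hf r x

lemma IsPermutationModule.congr {A B : Type}
    [AddCommGroup A] [Module (MonoidAlgebra k G) A]
    [AddCommGroup B] [Module (MonoidAlgebra k G) B]
    (e : A ≃ₗ[MonoidAlgebra k G] B) (h : IsPermutationModule k G B) :
    IsPermutationModule k G A := by
  obtain ⟨X, fX, mX, ⟨eB⟩⟩ := h
  exact ⟨X, fX, mX, ⟨e.trans eB⟩⟩

lemma IsPermutationModule.prod {A B : Type}
    [AddCommGroup A] [Module (MonoidAlgebra k G) A]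
    [AddCommGroup B] [Module (MonoidAlgebra k G) B]
    (hA : IsPermutationModule k G A) (hB : IsPermutationModule k G B) :
    IsPermutationModule k G (A × B) := by
  obtain ⟨X, fX, mX, ⟨eA⟩⟩ := hA
  obtain ⟨Y, fY, mY, ⟨eB⟩⟩ := hB
  letI : Fintype X := fX
  letI : Fintype Y := fY
  letI : MulAction G X := mX
  letI : MulAction G Y := mY
  refine ⟨X ⊕ Y, inferInstance, inferInstance, ⟨?_⟩⟩
  set ρ := Representation.ofMulAction k G X
  set τ := Representation.ofMulAction k G Y
  set π := Representation.ofMulAction k G (X ⊕ Y)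
  let E : MonoidAlgebra k (X ⊕ Y) ≃ₗ[k] MonoidAlgebra k X × MonoidAlgebra k Y :=
    ((MonoidAlgebra.coeffLinearEquiv k).trans (Finsupp.sumFinsuppLEquivProdFinsupp k)).trans
      (LinearEquiv.prodCongr (MonoidAlgebra.coeffLinearEquiv k).symm
        (MonoidAlgebra.coeffLinearEquiv k).symm)
  have hf1 : ∀ g : G, (LinearMap.fst k (MonoidAlgebra k X) (MonoidAlgebra k Y) ∘ₗ
      E.toLinearMap).comp (π g)
      = (ρ g).comp (LinearMap.fst k (MonoidAlgebra k X) (MonoidAlgebra k Y) ∘ₗ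
      E.toLinearMap) := by
    intro g
    apply MonoidAlgebra.lhom_ext'; intro z
    apply LinearMap.ext; intro r
    cases z <;> simp [E, π, ρ, MonoidAlgebra.coeffLinearEquiv, Finsupp.sumFinsuppLEquivProdFinsupp]
  have hf2 : ∀ g : G, (LinearMap.snd k (MonoidAlgebra k X) (MonoidAlgebra k Y) ∘ₗ
      E.toLinearMap).comp (π g)
      = (τ g).comp (LinearMap.snd k (MonoidAlgebra k X) (MonoidAlgebra k Y) ∘ₗ
      E.toLinearMap) := by
    intro g
    apply MonoidAlgebra.lhom_ext'; intro z
    apply LinearMap.ext; intro r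
    cases z <;> simp [E, π, τ, MonoidAlgebra.coeffLinearEquiv, Finsupp.sumFinsuppLEquivProdFinsupp]
  set F : π.asModule →ₗ[MonoidAlgebra k G] ρ.asModule × τ.asModule :=
    (asModuleHomOf π ρ _ hf1).prod (asModuleHomOf π τ _ hf2)
  have hbij : Function.Bijective F := by
    have : (F : π.asModule → ρ.asModule × τ.asModule)
        = (E : MonoidAlgebra k (X ⊕ Y) → MonoidAlgebra k X × MonoidAlgebra k Y) := by
      funext l
      rfl
    rw [this]
    exact E.bijective
  exact (eA.prodCongr eB).trans (LinearEquiv.ofBijective F hbij).symm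

lemma isPermutationModule_of_subsingleton {A : Type}
    [AddCommGroup A] [Module (MonoidAlgebra k G) A] [Subsingleton A] :
    IsPermutationModule k G A := by
  letI m : MulAction G (Fin 0) :=
    { smul := fun _ x => x, one_smul := fun _ => rfl, mul_smul := fun _ _ _ => rfl }
  refine ⟨Fin 0, inferInstance, m, ⟨?_⟩⟩
  haveI : Subsingleton ((Representation.ofMulAction k G (Fin 0)).asModule) :=
    ⟨fun a b => MonoidAlgebra.coeff_injective (Finsupp.ext fun x => x.elim0)⟩
  exact LinearEquiv.ofSubsingleton A _

lemma isPermutationModule_self [Finite G] :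
    IsPermutationModule k G (MonoidAlgebra k G) := by
  haveI : Fintype G := Fintype.ofFinite G
  exact ⟨G, inferInstance, inferInstance,
    ⟨(Representation.ofMulActionSelfAsModuleEquiv (k := k) (G := G)).symm⟩⟩

lemma isPermutationModule_finsupp_fin [Finite G] (n : ℕ) :
    IsPermutationModule k G (Fin n →₀ MonoidAlgebra k G) := by
  induction n with
  | zero =>
    haveI : Subsingleton (Fin 0 →₀ MonoidAlgebra k G) :=
      ⟨fun a b => Finsupp.ext fun x => x.elim0⟩
    exact isPermutationModule_of_subsingleton
  | succ n ih =>
    have e : (Fin (n+1) →₀ MonoidAlgebra k G) ≃ₗ[MonoidAlgebra k G]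
        (Fin n →₀ MonoidAlgebra k G) × (Fin 1 →₀ MonoidAlgebra k G) :=
      (Finsupp.domLCongr (finSumFinEquiv (m := n) (n := 1)).symm).trans
        (Finsupp.sumFinsuppLEquivProdFinsupp _)
    have e1 : (Fin 1 →₀ MonoidAlgebra k G) ≃ₗ[MonoidAlgebra k G] MonoidAlgebra k G :=
      Finsupp.LinearEquiv.finsuppUnique _ _ _
    exact IsPermutationModule.congr e
      (IsPermutationModule.prod ih (IsPermutationModule.congr e1 isPermutationModule_self))

lemma isPermutationModule_of_free [Finite G] (Q : Type)
    [AddCommGroup Q] [Module (MonoidAlgebra k G) Q]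
    [Module.Finite (MonoidAlgebra k G) Q] [Module.Free (MonoidAlgebra k G) Q] :
    IsPermutationModule k G Q := by
  set R := MonoidAlgebra k G
  let b := Module.Free.chooseBasis R Q
  let n := Fintype.card (Module.Free.ChooseBasisIndex R Q)
  have e : Q ≃ₗ[R] (Fin n →₀ R) := (b.reindex (Fintype.equivFin _)).repr
  exact IsPermutationModule.congr e (isPermutationModule_finsupp_fin n)

end Helpers

/-- If `M ⊕ Q` (with `Q` finitely generated free) has a finite permutation resolution
that is free up to degree `m`, then so does `M`. -/
theorem hasPermResFreeUpTo_of_prod_free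
    (p : ℕ) (hp : p.Prime) (k : Type) [Field k] [CharP k p]
    (G : Type) [Group G] [Finite G] (hG : IsPGroup p G) (m : ℕ)
    (M Q : Type)
    [AddCommGroup M] [Module (MonoidAlgebra k G) M] [Module.Finite (MonoidAlgebra k G) M]
    [AddCommGroup Q] [Module (MonoidAlgebra k G) Q] [Module.Finite (MonoidAlgebra k G) Q]
    [Module.Free (MonoidAlgebra k G) Q]
    (h : HasPermResFreeUpTo k G m (M × Q)) :
    HasPermResFreeUpTo k G m M := by
  classical
  obtain ⟨n, P, d, ε, hperm, hfree, hsub, hsurj, hex0, hex⟩ := h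
  set R := MonoidAlgebra k G
  -- lift the inclusion Q → M × Q along the surjection ε using projectivity of Q
  obtain ⟨σ, hσ⟩ := Module.projective_lifting_property ε.hom
    (LinearMap.inr R M Q) hsurj
  have hσ' : ∀ q : Q, (ε (σ q) : M × Q) = (0, q) := fun q => LinearMap.congr_fun hσ q
  refine ⟨max n 1,
    fun i => match i with
      | 0 => P 0
      | 1 => ModuleCat.of R (↑(P 1) × Q)
      | (j+2) => P (j+2),
    fun i => match i with
      | 0 => ModuleCat.ofHom (LinearMap.coprod (d 0).hom σ :
          (↑(P 1) × Q) →ₗ[R] ↑(P 0))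
      | 1 => ModuleCat.ofHom (LinearMap.prod (d 1).hom (0 : ↑(P 2) →ₗ[R] Q) :
          ↑(P 2) →ₗ[R] (↑(P 1) × Q))
      | (j+2) => d (j+2),
    ModuleCat.ofHom ((LinearMap.fst R M Q).comp ε.hom : ↑(P 0) →ₗ[R] M),
    ?_, ?_, ?_, ?_, ?_, ?_⟩
  · -- permutation
    intro i
    match i with
    | 0 => exact hperm 0
    | 1 => exact IsPermutationModule.prod (hperm 1) (isPermutationModule_of_free Q)
    | (j+2) => exact hperm (j+2)
  · -- free up to m
    intro i hi
    match i with
    | 0 => exact hfree 0 hi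
    | 1 =>
      haveI := hfree 1 hi
      exact inferInstanceAs (Module.Free R (↑(P 1) × Q))
    | (j+2) => exact hfree (j+2) hi
  · -- subsingleton beyond max n 1
    intro i hi
    match i with
    | 0 => omega
    | 1 => omega
    | (j+2) => exact hsub (j+2) (by omega)
  · -- surjective
    intro x
    obtain ⟨y, hy⟩ := hsurj (x, 0)
    refine ⟨y, ?_⟩
    show (LinearMap.fst R M Q) (ε y) = x
    rw [hy]
    rfl
  · -- exact at degree 0
    intro y
    constructor
    · intro hy
      have hy1 : (ε y : M × Q).1 = 0 := hy
      set q := (ε y : M × Q).2 with hq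
      have h2 : (ε y : M × Q) = (0, q) := Prod.ext hy1 rfl
      have h3 : (ε (y - σ q) : M × Q) = 0 := by
        rw [map_sub, hσ' q, h2, sub_self]
      obtain ⟨z, hz⟩ := (hex0 (y - σ q)).mp h3
      refine ⟨(z, q), ?_⟩
      show d 0 z + σ q = y
      rw [hz]
      abel
    · rintro ⟨⟨z, q⟩, rfl⟩
      show (LinearMap.fst R M Q) (ε (d 0 z + σ q)) = 0
      rw [map_add, hex0.apply_apply_eq_zero z, hσ' q]
      simp
  · -- exact at higher degrees
    intro i
    match i with
    | 0 =>
      intro y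
      constructor
      · intro hy
        have h1 : d 0 y.1 + σ y.2 = 0 := hy
        have h2 : (ε (d 0 y.1 + σ y.2) : M × Q) = 0 := by rw [h1]; simp
        rw [map_add, hex0.apply_apply_eq_zero y.1, hσ' y.2, zero_add] at h2
        have hq : y.2 = 0 := congrArg Prod.snd h2
        have h3 : d 0 y.1 = 0 := by
          rw [hq] at h1; simpa using h1
        obtain ⟨z, hz⟩ := ((hex 0) y.1).mp h3
        refine ⟨z, ?_⟩
        show ((d 1 z, (0 : Q)) : ↑(P 1) × Q) = y
        refine Prod.ext ?_ ?_
        · exact hz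
        · exact hq.symm
      · rintro ⟨z, rfl⟩
        show d 0 (d 1 z) + σ 0 = 0
        rw [(hex 0).apply_apply_eq_zero z]
        simp
    | 1 =>
      intro y
      constructor
      · intro hy
        have h1 : d 1 y = 0 := congrArg Prod.fst hy
        obtain ⟨z, hz⟩ := ((hex 1) y).mp h1
        exact ⟨z, hz⟩
      · rintro ⟨z, rfl⟩
        show ((d 1 (d 2 z), (0 : Q)) : ↑(P 1) × Q) = 0
        refine Prod.ext ?_ rfl
        exact (hex 1).apply_apply_eq_zero z
    | (j+2) => exact hex (j+2)
end

section
/- Let G be a finite p-group and k a field of characteristic p > 0. Let 0 → K → F → M → 0 be a short exact sequence of finite-dimensional kG-modules in which F is a finitely generated free kG-module. Then M admits good permutation resolutions if and only if K admits good permutation resolutions. -/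
open CategoryTheory

section AuxEquivs
open Representation
variable (k G : Type) [Field k] [Group G]

lemma smul_asModule {V : Type} [AddCommGroup V] [Module k V] (ρ : Representation k G V)
    (r : MonoidAlgebra k G) (x : ρ.asModule) : r • x = ρ.asAlgebraHom r x := rfl

def sumMulAction (X Y : Type) [MulAction G X] [MulAction G Y] : MulAction G (X ⊕ Y) where
  smul g := Sum.map (g • ·) (g • ·)
  one_smul p := by
    cases p with
    | inl x => show Sum.inl ((1 : G) • x) = Sum.inl x; rw [one_smul]
    | inr y => show Sum.inr ((1 : G) • y) = Sum.inr y; rw [one_smul]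
  mul_smul g h p := by
    cases p with
    | inl x => show Sum.inl ((g * h) • x) = Sum.inl (g • h • x); rw [mul_smul]
    | inr y => show Sum.inr ((g * h) • y) = Sum.inr (g • h • y); rw [mul_smul]

noncomputable def permSumEquiv (X Y : Type) [MulAction G X] [MulAction G Y] :
    (@ofMulAction k _ G _ (X ⊕ Y) (sumMulAction G X Y)).asModule
      ≃ₗ[MonoidAlgebra k G]
      ((ofMulAction k G X).asModule × (ofMulAction k G Y).asModule) :=
  letI := sumMulAction G X Y
  AddEquiv.toLinearEquiv
    ((asModuleEquiv (ofMulAction k G (X ⊕ Y))).toAddEquiv.trans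
      (MonoidAlgebra.coeffAddEquiv.trans
        ((Finsupp.sumFinsuppAddEquivProdFinsupp (α := X) (β := Y) (M := k)).trans
          (AddEquiv.prodCongr
            (MonoidAlgebra.coeffAddEquiv.symm.trans
              (asModuleEquiv (ofMulAction k G X)).symm.toAddEquiv)
            (MonoidAlgebra.coeffAddEquiv.symm.trans
              (asModuleEquiv (ofMulAction k G Y)).symm.toAddEquiv)))))
    (by
      classical
      intro r x
      induction r using MonoidAlgebra.induction_linear with
      | zero => simp
      | add f g hf hg => simp only [add_smul, map_add, hf, hg]
      | single g c =>
        have hps : ∀ (u : (ofMulAction k G X).asModule) (w : (ofMulAction k G Y).asModule),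
            (MonoidAlgebra.single g c : MonoidAlgebra k G) •
              ((u, w) : (ofMulAction k G X).asModule × (ofMulAction k G Y).asModule)
              = (c • ofMulAction k G X g u, c • ofMulAction k G Y g w) := fun u w => by
          rw [Prod.smul_mk, smul_asModule, smul_asModule, asAlgebraHom_single,
            asAlgebraHom_single]; rfl
        let E : MonoidAlgebra k (X ⊕ Y) ≃+ MonoidAlgebra k X × MonoidAlgebra k Y :=
          MonoidAlgebra.coeffAddEquiv.trans
            ((Finsupp.sumFinsuppAddEquivProdFinsupp (α := X) (β := Y) (M := k)).trans
              (AddEquiv.prodCongr MonoidAlgebra.coeffAddEquiv.symm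
                MonoidAlgebra.coeffAddEquiv.symm))
        have hEl : ∀ (x' : X) (v : k), E (MonoidAlgebra.single (Sum.inl x') v)
            = (MonoidAlgebra.single x' v, 0) := by
          intro x' v
          simp [E, Finsupp.comapDomain_single, Finsupp.comapDomain_single_of_not_mem_range]
          rfl
        have hEr : ∀ (y' : Y) (v : k), E (MonoidAlgebra.single (Sum.inr y') v)
            = (0, MonoidAlgebra.single y' v) := by
          intro y' v
          simp [E, Finsupp.comapDomain_single, Finsupp.comapDomain_single_of_not_mem_range]
          rfl
        have key : ∀ y : MonoidAlgebra k (X ⊕ Y), E (c • ofMulAction k G (X ⊕ Y) g y)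
            = (c • ofMulAction k G X g (E y).1, c • ofMulAction k G Y g (E y).2) := by
          intro y
          induction y using MonoidAlgebra.induction_linear with
          | zero => simp; rfl
          | add f g hf hg => simp only [map_add, smul_add, hf, hg, Prod.fst_add, Prod.snd_add,
              Prod.mk_add_mk]
          | single p a =>
            rw [ofMulAction_single, MonoidAlgebra.smul_single']
            cases p with
            | inl x' =>
              change E (MonoidAlgebra.single (Sum.inl (g • x')) (c * a)) = _
              rw [hEl, hEl]
              simp [ofMulAction_single, MonoidAlgebra.smul_single']
            | inr y' =>
              change E (MonoidAlgebra.single (Sum.inr (g • y')) (c * a)) = _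
              rw [hEr, hEr]
              simp [ofMulAction_single, MonoidAlgebra.smul_single']
        rw [smul_asModule, asAlgebraHom_single]
        exact (key x).trans (hps _ _).symm)

def prodMulAction (ι : Type) : MulAction G (ι × G) where
  smul g p := (p.1, g * p.2)
  one_smul p := by cases p; simp [HSMul.hSMul, SMul.smul]
  mul_smul g h p := by cases p; simp [HSMul.hSMul, SMul.smul, mul_assoc]

lemma curry_single' {α β M : Type} [AddCommMonoid M] [Module k M] (p : α × β) (key : M) :
    Finsupp.finsuppProdLEquiv (α := α) (β := β) k (Finsupp.single p key)
      = Finsupp.single p.1 (Finsupp.single p.2 key) := by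
  classical
  ext j x
  rw [Finsupp.finsuppProdLEquiv, Finsupp.curryLinearEquiv_apply]
  obtain ⟨a, b⟩ := p
  by_cases h1 : a = j <;> by_cases h2 : b = x <;>
    simp [Finsupp.single_apply, Prod.ext_iff, h1, h2]

noncomputable def permFinsuppEquiv (ι : Type) :
    (@ofMulAction k _ G _ (ι × G) (prodMulAction G ι)).asModule
      ≃ₗ[MonoidAlgebra k G] (ι →₀ MonoidAlgebra k G) :=
  letI := prodMulAction G ι
  AddEquiv.toLinearEquiv
    ((asModuleEquiv (ofMulAction k G (ι × G))).toAddEquiv.trans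
      (MonoidAlgebra.coeffAddEquiv.trans
      ((Finsupp.finsuppProdLEquiv k (α := ι) (β := G) (M := k)).toAddEquiv.trans
        (Finsupp.mapRange.addEquiv MonoidAlgebra.coeffAddEquiv.symm))))
    (by
      intro r x
      induction r using MonoidAlgebra.induction_linear with
      | zero => simp
      | add f g hf hg => simp only [add_smul, map_add, hf, hg]
      | single g c =>
        let E : MonoidAlgebra k (ι × G) ≃+ (ι →₀ MonoidAlgebra k G) :=
          MonoidAlgebra.coeffAddEquiv.trans
            ((Finsupp.finsuppProdLEquiv k (α := ι) (β := G) (M := k)).toAddEquiv.trans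
              (Finsupp.mapRange.addEquiv MonoidAlgebra.coeffAddEquiv.symm))
        have hE : ∀ (q : ι × G) (v : k), E (MonoidAlgebra.single q v)
            = (Finsupp.single q.1 (MonoidAlgebra.single q.2 v) : ι →₀ MonoidAlgebra k G) := by
          intro q v
          show Finsupp.mapRange _ (map_zero MonoidAlgebra.coeffAddEquiv.symm)
            (Finsupp.finsuppProdLEquiv k (MonoidAlgebra.single q v).coeff) = _
          rw [MonoidAlgebra.coeff_single, curry_single', Finsupp.mapRange_single]
          rfl
        have key : ∀ y : MonoidAlgebra k (ι × G), E (c • ofMulAction k G (ι × G) g y)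
            = (MonoidAlgebra.single g c : MonoidAlgebra k G) • E y := by
          intro y
          induction y using MonoidAlgebra.induction_linear with
          | zero => simp
          | add f g hf hg => simp only [map_add, smul_add, hf, hg]
          | single p a =>
            obtain ⟨i, h⟩ := p
            rw [ofMulAction_single, MonoidAlgebra.smul_single']
            change E (MonoidAlgebra.single (i, g * h) (c * a)) = _
            rw [hE, hE]
            dsimp only
            rw [Finsupp.smul_single]
            congr 1
            have hsm : (MonoidAlgebra.single g c : MonoidAlgebra k G) •
                (MonoidAlgebra.single h a : MonoidAlgebra k G)
                = MonoidAlgebra.single g c * MonoidAlgebra.single h a := rfl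
            rw [hsm, MonoidAlgebra.single_mul_single]
        rw [smul_asModule, asAlgebraHom_single]
        exact key x)

end AuxEquivs

section Schanuel
variable {R : Type} [Ring R]
variable {X P : Type} [AddCommGroup X] [Module R X] [AddCommGroup P] [Module R P]

/-- A split surjection decomposes the source as kernel × target. -/
noncomputable def splitEquiv (π : X →ₗ[R] P) (s : P →ₗ[R] X)
    (hs : π.comp s = LinearMap.id) : X ≃ₗ[R] (↥(LinearMap.ker π) × P) := by
  have hsy : ∀ q, π (s q) = q := fun q => DFunLike.congr_fun hs q
  have hmem : ∀ x : X, ((LinearMap.id : X →ₗ[R] X) - s.comp π) x ∈ LinearMap.ker π := by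
    intro x
    simp [LinearMap.mem_ker, hsy]
  refine LinearEquiv.ofLinear
    (LinearMap.prod
      (((LinearMap.id : X →ₗ[R] X) - s.comp π).codRestrict (LinearMap.ker π) hmem) π)
    (LinearMap.coprod (LinearMap.ker π).subtype s) ?_ ?_
  · apply LinearMap.ext
    rintro ⟨⟨y, hy⟩, q⟩
    have hy' : π y = 0 := LinearMap.mem_ker.1 hy
    refine Prod.ext (Subtype.ext ?_) ?_
    · show (y + s q) - s (π (y + s q)) = y
      rw [map_add, hy', hsy, zero_add]
      abel
    · show π (y + s q) = q
      rw [map_add, hy', hsy, zero_add]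
  · apply LinearMap.ext
    intro x
    show (x - s (π x)) + s (π x) = x
    abel

variable {K F M : Type} [AddCommGroup K] [Module R K] [AddCommGroup F] [Module R F]
  [AddCommGroup M] [Module R M]

lemma schanuel (f : K →ₗ[R] F) (g : F →ₗ[R] M) (hf : Function.Injective f)
    (hg : Function.Surjective g) (hfg : Function.Exact f g)
    (ε : P →ₗ[R] M) (hε : Function.Surjective ε)
    (hF : Module.Free R F) (hP : Module.Free R P) :
    Nonempty ((K × P) ≃ₗ[R] (↥(LinearMap.ker ε) × F)) := by
  classical
  set φ : (F × P) →ₗ[R] M := g.comp (LinearMap.fst R F P) - ε.comp (LinearMap.snd R F P) with hφ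
  set Xs : Submodule R (F × P) := LinearMap.ker φ with hXs
  have memXs : ∀ (a : F) (b : P), (a, b) ∈ Xs ↔ g a = ε b := by
    intro a b
    simp [hXs, hφ, LinearMap.mem_ker, sub_eq_zero]
  set πP : ↥Xs →ₗ[R] P := (LinearMap.snd R F P).comp Xs.subtype with hπP
  set πF : ↥Xs →ₗ[R] F := (LinearMap.fst R F P).comp Xs.subtype with hπF
  have hπPsurj : Function.Surjective πP := by
    intro b
    obtain ⟨a, ha⟩ := hg (ε b)
    exact ⟨⟨(a, b), (memXs a b).2 ha⟩, rfl⟩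
  have hπFsurj : Function.Surjective πF := by
    intro a
    obtain ⟨b, hb⟩ := hε (g a)
    exact ⟨⟨(a, b), (memXs a b).2 hb.symm⟩, rfl⟩
  haveI : Module.Free R F := hF
  haveI : Module.Free R P := hP
  obtain ⟨sP, hsP⟩ := Module.projective_lifting_property πP LinearMap.id hπPsurj
  obtain ⟨sF, hsF⟩ := Module.projective_lifting_property πF LinearMap.id hπFsurj
  have eP : ↥Xs ≃ₗ[R] (↥(LinearMap.ker πP) × P) := splitEquiv πP sP hsP
  have eF : ↥Xs ≃ₗ[R] (↥(LinearMap.ker πF) × F) := splitEquiv πF sF hsF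
  -- ker πP ≃ ker g ≃ K
  have eKP : ↥(LinearMap.ker πP) ≃ₗ[R] ↥(LinearMap.ker g) := by
    refine LinearEquiv.ofBijective
      (LinearMap.codRestrict (LinearMap.ker g) (πF.comp (LinearMap.ker πP).subtype) ?_) ⟨?_, ?_⟩
    · rintro ⟨⟨⟨a, b⟩, hab⟩, hker⟩
      have hb : b = 0 := hker
      have := (memXs a b).1 hab
      show g a = 0
      rw [this, hb, map_zero]
    · rintro ⟨⟨⟨a, b⟩, hab⟩, hker⟩ ⟨⟨⟨a', b'⟩, hab'⟩, hker'⟩ h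
      have ha : a = a' := congrArg Subtype.val h
      have hb : b = 0 := hker
      have hb' : b' = 0 := hker'
      apply Subtype.ext; apply Subtype.ext
      exact Prod.ext ha (hb.trans hb'.symm)
    · rintro ⟨a, ha⟩
      have : (a, (0 : P)) ∈ Xs := (memXs a 0).2 (by simp [LinearMap.mem_ker.1 ha])
      exact ⟨⟨⟨(a, 0), this⟩, by simp [hπP, LinearMap.mem_ker]⟩, by apply Subtype.ext; rfl⟩
  have eKF : ↥(LinearMap.ker πF) ≃ₗ[R] ↥(LinearMap.ker ε) := by
    refine LinearEquiv.ofBijective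
      (LinearMap.codRestrict (LinearMap.ker ε) (πP.comp (LinearMap.ker πF).subtype) ?_) ⟨?_, ?_⟩
    · rintro ⟨⟨⟨a, b⟩, hab⟩, hker⟩
      have ha : a = 0 := hker
      have := (memXs a b).1 hab
      show ε b = 0
      rw [← this, ha, map_zero]
    · rintro ⟨⟨⟨a, b⟩, hab⟩, hker⟩ ⟨⟨⟨a', b'⟩, hab'⟩, hker'⟩ h
      have hb : b = b' := congrArg Subtype.val h
      have ha : a = 0 := hker
      have ha' : a' = 0 := hker'
      apply Subtype.ext; apply Subtype.ext
      exact Prod.ext (ha.trans ha'.symm) hb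
    · rintro ⟨b, hb⟩
      have : ((0 : F), b) ∈ Xs := (memXs 0 b).2 (by simp [LinearMap.mem_ker.1 hb])
      exact ⟨⟨⟨(0, b), this⟩, by simp [hπF, LinearMap.mem_ker]⟩, by apply Subtype.ext; rfl⟩
  have eK : K ≃ₗ[R] ↥(LinearMap.ker g) :=
    (LinearEquiv.ofInjective f hf).trans (LinearEquiv.ofEq _ _ (LinearMap.exact_iff.1 hfg).symm)
  exact ⟨(eK.prodCongr (LinearEquiv.refl R P)).trans
    ((eKP.symm.prodCongr (LinearEquiv.refl R P)).trans
      (eP.symm.trans (eF.trans (eKF.prodCongr (LinearEquiv.refl R F)))))⟩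

end Schanuel

section PermClosure
variable {k G : Type} [Field k] [Group G] [Finite G]
variable {A B : Type} [AddCommGroup A] [Module (MonoidAlgebra k G) A]
  [AddCommGroup B] [Module (MonoidAlgebra k G) B]

lemma isPerm_of_equiv (h : IsPermutationModule k G A) (e : A ≃ₗ[MonoidAlgebra k G] B) :
    IsPermutationModule k G B := by
  obtain ⟨X, fX, mX, ⟨u⟩⟩ := h
  exact ⟨X, fX, mX, ⟨e.symm.trans u⟩⟩

lemma isPerm_finsupp (ι : Type) [Fintype ι] :
    IsPermutationModule k G (ι →₀ MonoidAlgebra k G) := by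
  cases nonempty_fintype G
  exact ⟨ι × G, inferInstance, prodMulAction G ι, ⟨(permFinsuppEquiv k G ι).symm⟩⟩

lemma isPerm_of_free_finite [Module.Finite (MonoidAlgebra k G) A]
    [Module.Free (MonoidAlgebra k G) A] : IsPermutationModule k G A := by
  have b := Module.Free.chooseBasis (MonoidAlgebra k G) A
  exact isPerm_of_equiv (isPerm_finsupp _) b.repr.symm

lemma isPerm_prod (hA : IsPermutationModule k G A) (hB : IsPermutationModule k G B) :
    IsPermutationModule k G (A × B) := by
  obtain ⟨X, fX, mX, ⟨u⟩⟩ := hA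
  obtain ⟨Y, fY, mY, ⟨v⟩⟩ := hB
  letI := mX; letI := mY
  refine ⟨X ⊕ Y, inferInstance, sumMulAction G X Y,
    ⟨(u.prodCongr v).trans (permSumEquiv k G X Y).symm⟩⟩

end PermClosure

section Resolutions

variable {k G : Type} [Field k] [Group G] [Finite G] {m : ℕ}
variable {A B M N : Type}
  [AddCommGroup A] [Module (MonoidAlgebra k G) A]
  [AddCommGroup B] [Module (MonoidAlgebra k G) B]
  [AddCommGroup M] [Module (MonoidAlgebra k G) M]
  [AddCommGroup N] [Module (MonoidAlgebra k G) N]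

omit [Finite G] in
lemma hasPermResFreeUpTo_of_equiv (e : M ≃ₗ[MonoidAlgebra k G] N)
    (h : HasPermResFreeUpTo k G m M) : HasPermResFreeUpTo k G m N := by
  obtain ⟨n, P, d, ε, h1, h2, h3, h4, h5, h6⟩ := h
  refine ⟨n, P, d,
    ModuleCat.ofHom (e.toLinearMap.comp ε.hom :
      ↥(P 0) →ₗ[MonoidAlgebra k G] N),
    h1, h2, h3, e.surjective.comp h4, ?_, h6⟩
  rw [LinearMap.exact_iff]
  have : LinearMap.ker (e.toLinearMap.comp ε.hom)
      = LinearMap.ker ε.hom := by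
    rw [LinearMap.ker_comp, LinearEquiv.ker, Submodule.comap_bot]
  exact this.trans (LinearMap.exact_iff.1 h5)

omit [Finite G] in
lemma hasPermResFreeUpTo_succ (h : HasPermResFreeUpTo k G (m + 1) M) :
    HasPermResFreeUpTo k G m M := by
  obtain ⟨n, P, d, ε, h1, h2, h3, h4, h5, h6⟩ := h
  exact ⟨n, P, d, ε, h1, fun i hi => h2 i (by omega), h3, h4, h5, h6⟩

omit [Finite G] in
lemma hasPermResFreeUpTo_ker {n : ℕ} (P : ℕ → ModuleCat (MonoidAlgebra k G))
    (d : ∀ i, P (i + 1) ⟶ P i) (ε : P 0 ⟶ ModuleCat.of (MonoidAlgebra k G) M)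
    (h1 : ∀ i, IsPermutationModule k G (P i))
    (h2 : ∀ i ≤ m + 1, Module.Free (MonoidAlgebra k G) (P i))
    (h3 : ∀ i, n < i → Subsingleton (P i))
    (h5 : Function.Exact (d 0) ε)
    (h6 : ∀ i, Function.Exact (d (i + 1)) (d i)) :
    HasPermResFreeUpTo k G m
      ↥(LinearMap.ker ε.hom) := by
  refine ⟨n, fun i => P (i + 1), fun i => d (i + 1),
    ModuleCat.ofHom (LinearMap.codRestrict _ (d 0).hom ?_ :
      ↥(P 1) →ₗ[MonoidAlgebra k G] ↥(LinearMap.ker ε.hom)),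
    fun i => h1 (i + 1), fun i hi => h2 (i + 1) (by omega),
    fun i hi => h3 (i + 1) (by omega), ?_, ?_, fun i => h6 (i + 1)⟩
  · intro x
    rw [LinearMap.mem_ker]
    exact h5.apply_apply_eq_zero x
  · rintro ⟨y, hy⟩
    obtain ⟨x, hx⟩ := (h5 y).1 (LinearMap.mem_ker.1 hy)
    exact ⟨x, Subtype.ext hx⟩
  · rw [LinearMap.exact_iff]
    exact (LinearMap.ker_codRestrict _ _ _).trans (LinearMap.exact_iff.1 (h6 0))

omit [Finite G] in
lemma hasPermResFreeUpTo_prepend (f : A →ₗ[MonoidAlgebra k G] B)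
    (g : B →ₗ[MonoidAlgebra k G] M) (hf : Function.Injective f)
    (hg : Function.Surjective g) (hfg : Function.Exact f g)
    (hBperm : IsPermutationModule k G B) (hBfree : Module.Free (MonoidAlgebra k G) B)
    (h : HasPermResFreeUpTo k G m A) : HasPermResFreeUpTo k G m M := by
  obtain ⟨n, P, d, ε, h1, h2, h3, h4, h5, h6⟩ := h
  refine ⟨n + 1,
    fun i => match i with | 0 => ModuleCat.of (MonoidAlgebra k G) B | (j+1) => P j,
    fun i => match i with
      | 0 => ModuleCat.ofHom (f.comp ε.hom : ↥(P 0) →ₗ[MonoidAlgebra k G] B)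
      | (j+1) => d j,
    ModuleCat.ofHom (g : B →ₗ[MonoidAlgebra k G] M), ?_, ?_, ?_, hg, ?_, ?_⟩
  · intro i
    match i with
    | 0 => exact hBperm
    | (j+1) => exact h1 j
  · intro i hi
    match i with
    | 0 => exact hBfree
    | (j+1) => exact h2 j (by omega)
  · intro i hi
    match i with
    | (j+1) => exact h3 j (by omega)
  · rw [LinearMap.exact_iff]
    have hr : LinearMap.range (f.comp ε.hom)
        = LinearMap.range f := by
      rw [LinearMap.range_comp, LinearMap.range_eq_top.2 h4, Submodule.map_top]
    exact (LinearMap.exact_iff.1 hfg).trans hr.symm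
  · intro i
    match i with
    | 0 =>
      rw [LinearMap.exact_iff]
      have hk : LinearMap.ker (f.comp ε.hom)
          = LinearMap.ker ε.hom := by
        rw [LinearMap.ker_comp, LinearMap.ker_eq_bot.2 hf, Submodule.comap_bot]
      exact hk.trans (LinearMap.exact_iff.1 h5)
    | (j+1) => exact h6 j

lemma hasPermResFreeUpTo_prod (h : HasPermResFreeUpTo k G m A)
    (hBperm : IsPermutationModule k G B) (hBfree : Module.Free (MonoidAlgebra k G) B) :
    HasPermResFreeUpTo k G m (A × B) := by
  obtain ⟨n, P, d, ε, h1, h2, h3, h4, h5, h6⟩ := h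
  refine ⟨n,
    fun i => match i with
      | 0 => ModuleCat.of (MonoidAlgebra k G) (↥(P 0) × B)
      | (j+1) => P (j+1),
    fun i => match i with
      | 0 => ModuleCat.ofHom ((d 0).hom.prod
          (0 : ↥(P 1) →ₗ[MonoidAlgebra k G] B))
      | (j+1) => d (j+1),
    ModuleCat.ofHom (ε.hom.prodMap
      (LinearMap.id : B →ₗ[MonoidAlgebra k G] B)), ?_, ?_, ?_, ?_, ?_, ?_⟩
  · intro i
    match i with
    | 0 => exact isPerm_prod (h1 0) hBperm
    | (j+1) => exact h1 (j+1)
  · intro i hi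
    match i with
    | 0 =>
      haveI := h2 0 (Nat.zero_le m)
      haveI := hBfree
      exact (inferInstance : Module.Free (MonoidAlgebra k G) (↥(P 0) × B))
    | (j+1) => exact h2 (j+1) hi
  · intro i hi
    match i with
    | 0 => exact absurd hi (by omega)
    | (j+1) => exact h3 (j+1) hi
  · exact h4.prodMap Function.surjective_id
  · rintro ⟨u, b⟩
    constructor
    · intro h0
      have hu : ε u = 0 := congrArg Prod.fst h0
      have hb : b = 0 := congrArg Prod.snd h0
      obtain ⟨y, hy⟩ := (h5 u).1 hu
      exact ⟨y, Prod.ext hy hb.symm⟩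
    · rintro ⟨y, hy⟩
      have hu : d 0 y = u := congrArg Prod.fst hy
      have hb : (0 : B) = b := congrArg Prod.snd hy
      show (ε u, b) = 0
      rw [← hu, ← hb]
      exact Prod.ext (h5.apply_apply_eq_zero y) rfl
  · intro i
    match i with
    | 0 =>
      intro y
      constructor
      · intro h0
        exact (h6 0 y).1 (congrArg Prod.fst h0)
      · intro hy
        exact Prod.ext ((h6 0 y).2 hy) rfl
    | (j+1) => exact h6 (j+1)

lemma hasPermResFreeUpTo_strip (h : HasPermResFreeUpTo k G m (A × B))
    (hBperm : IsPermutationModule k G B) (hBfree : Module.Free (MonoidAlgebra k G) B) :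
    HasPermResFreeUpTo k G m A := by
  obtain ⟨n, P, d, ε, h1, h2, h3, h4, h5, h6⟩ := h
  haveI := hBfree
  obtain ⟨s, hs⟩ := Module.projective_lifting_property
    ε.hom (LinearMap.inr (MonoidAlgebra k G) A B) h4
  have hsb : ∀ b : B, ε (s b) = (0, b) := fun b => DFunLike.congr_fun hs b
  refine ⟨n + 2,
    fun i => match i with
      | 0 => P 0
      | 1 => ModuleCat.of (MonoidAlgebra k G) (↥(P 1) × B)
      | (j+2) => P (j+2),
    fun i => match i with
      | 0 => ModuleCat.ofHom ((d 0).hom.coprod s)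
      | 1 => ModuleCat.ofHom ((d 1).hom.prod
          (0 : ↥(P 2) →ₗ[MonoidAlgebra k G] B))
      | (j+2) => d (j+2),
    ModuleCat.ofHom ((LinearMap.fst (MonoidAlgebra k G) A B).comp
      ε.hom), ?_, ?_, ?_, ?_, ?_, ?_⟩
  · intro i
    match i with
    | 0 => exact h1 0
    | 1 => exact isPerm_prod (h1 1) hBperm
    | (j+2) => exact h1 (j+2)
  · intro i hi
    match i with
    | 0 => exact h2 0 (Nat.zero_le m)
    | 1 =>
      haveI := h2 1 hi
      haveI := hBfree
      exact (inferInstance : Module.Free (MonoidAlgebra k G) (↥(P 1) × B))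
    | (j+2) => exact h2 (j+2) hi
  · intro i hi
    match i with
    | 0 => exact absurd hi (by omega)
    | 1 => exact absurd hi (by omega)
    | (j+2) => exact h3 (j+2) (by omega)
  · intro a
    obtain ⟨x, hx⟩ := h4 (a, 0)
    refine ⟨x, ?_⟩
    show (ε x).1 = a
    rw [hx]
  · intro x
    constructor
    · intro h0
      have h0' : (ε x).1 = 0 := h0
      have hxs : ε (x - s (ε x).2) = 0 := by
        rw [map_sub, hsb]
        refine Prod.ext ?_ ?_
        · show (ε x).1 - 0 = 0
          rw [sub_zero, h0']
        · show (ε x).2 - (ε x).2 = 0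
          exact sub_self _
      obtain ⟨y, hy⟩ := (h5 _).1 hxs
      refine ⟨(y, (ε x).2), ?_⟩
      show d 0 y + s (ε x).2 = x
      rw [hy]
      exact sub_add_cancel x (s (ε x).2)
    · rintro ⟨⟨y, b⟩, hyb⟩
      have hyb' : d 0 y + s b = x := hyb
      show (ε x).1 = 0
      rw [← hyb', map_add, (h5 (d 0 y)).2 ⟨y, rfl⟩, hsb, zero_add]
  · intro i
    match i with
    | 0 =>
      rintro ⟨y, b⟩
      constructor
      · intro h0
        have h0' : d 0 y + s b = 0 := h0
        have hε : ε (d 0 y) + ε (s b) = 0 := by rw [← map_add, h0', map_zero]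
        rw [(h5 (d 0 y)).2 ⟨y, rfl⟩, zero_add, hsb] at hε
        have hb : b = 0 := congrArg Prod.snd hε
        have hdy : d 0 y = 0 := by
          rw [hb, map_zero, add_zero] at h0'
          exact h0'
        obtain ⟨z, hz⟩ := (h6 0 y).1 hdy
        exact ⟨z, Prod.ext hz hb.symm⟩
      · rintro ⟨z, hz⟩
        have hz1 : d 1 z = y := congrArg Prod.fst hz
        have hz2 : (0 : B) = b := congrArg Prod.snd hz
        show d 0 y + s b = 0
        rw [← hz1, ← hz2, map_zero, add_zero, (h6 0 (d 1 z)).2 ⟨z, rfl⟩]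
    | 1 =>
      intro z
      constructor
      · intro h0
        exact (h6 1 z).1 (congrArg Prod.fst h0)
      · intro hz
        exact Prod.ext ((h6 1 z).2 hz) rfl
    | (j+2) => exact h6 (j+2)

end Resolutions


/-- Given a short exact sequence `0 → K → F → M → 0` of finite-dimensional `kG`-modules
with `F` finitely generated free, `M` admits good permutation resolutions if and only
if `K` does. -/
theorem hasGoodPermRes_iff_of_free_cover
    (p : ℕ) (hp : p.Prime) (k : Type) [Field k] [CharP k p]
    (G : Type) [Group G] [Finite G] (hG : IsPGroup p G)
    (K F M : Type)
    [AddCommGroup K] [Module (MonoidAlgebra k G) K] [Module.Finite (MonoidAlgebra k G) K]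
    [AddCommGroup F] [Module (MonoidAlgebra k G) F] [Module.Finite (MonoidAlgebra k G) F]
    [Module.Free (MonoidAlgebra k G) F]
    [AddCommGroup M] [Module (MonoidAlgebra k G) M] [Module.Finite (MonoidAlgebra k G) M]
    (f : K →ₗ[MonoidAlgebra k G] F) (g : F →ₗ[MonoidAlgebra k G] M)
    (hf : Function.Injective f) (hg : Function.Surjective g)
    (hfg : Function.Exact f g) :
    HasGoodPermRes k G M ↔ HasGoodPermRes k G K := by
  constructor
  · intro hM m
    obtain ⟨n, P, d, ε, h1, h2, h3, h4, h5, h6⟩ := hM (m + 1)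
    have hKer := hasPermResFreeUpTo_ker (m := m) P d ε h1 h2 h3 h5 h6
    have hFperm : IsPermutationModule k G F := isPerm_of_free_finite
    have hKF := hasPermResFreeUpTo_prod hKer hFperm inferInstance
    have hP0free : Module.Free (MonoidAlgebra k G) ↥(P 0) := h2 0 (by omega)
    obtain ⟨e⟩ := schanuel f g hf hg hfg ε.hom h4
      inferInstance hP0free
    have h2' := hasPermResFreeUpTo_of_equiv e.symm hKF
    exact hasPermResFreeUpTo_strip h2' (h1 0) hP0free
  · intro hK m
    exact hasPermResFreeUpTo_prepend f g hf hg hfg isPerm_of_free_finite inferInstance (hK m)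
end
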